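/- Let η₁, η₂, …, η_n (n ≥ 2) be independent, identically distributed real-valued random variables whose common distribution is atomless. For 2 ≤ i ≤ n define the record indicator B_i = I(η_i < min(η₁, …, η_{i−1})). Then the random variables B₂, …, B_n are mutually independent and P(B_i = 1) = 1/i for every 2 ≤ i ≤ n. -/

import Mathlib

open MeasureTheory ProbabilityTheory
open scoped ENNReal Classical

/-- The record indicator `B_i = I(η_i < min(η₁, …, η_{i−1}))`, as a `{0,1}`-valued
(`Fin 2`-valued) random variable: `B_i = 1` exactly when the `i`-th sample is strictly
smaller than all previous samples (indices `1, …, i−1`). -/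
noncomputable def recordInd {Ω : Type*} (η : ℕ → Ω → ℝ) (i : ℕ) (ω : Ω) : Fin 2 :=
  if η i ω < sInf ((fun j => η j ω) '' {j | 1 ≤ j ∧ j < i}) then 1 else 0

section Aux

variable {Ω : Type*} [MeasurableSpace Ω] {μ : Measure Ω} [IsProbabilityMeasure μ]
  {n : ℕ} {η : ℕ → Ω → ℝ}

/-- The record event as a set. -/
def recSet (η : ℕ → Ω → ℝ) (i : ℕ) : Set Ω :=
  {ω | ∀ j, 1 ≤ j → j < i → η i ω < η j ω}

lemma recSet_measurable (hmeas : ∀ i, Measurable (η i)) (i : ℕ) :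
    MeasurableSet (recSet η i) := by
  have : recSet η i =
      ⋂ (j : ℕ), ⋂ (_ : 1 ≤ j), ⋂ (_ : j < i), {ω | η i ω < η j ω} := by
    ext ω; simp [recSet, Set.mem_iInter]
  rw [this]
  exact MeasurableSet.iInter fun j => MeasurableSet.iInter fun _ =>
    MeasurableSet.iInter fun _ => measurableSet_lt (hmeas i) (hmeas j)

lemma recordInd_preimage {i : ℕ} (hi : 2 ≤ i) :
    recordInd η i ⁻¹' {1} = recSet η i := by
  ext ω
  have hfin : ((fun j => η j ω) '' {j | 1 ≤ j ∧ j < i}).Finite := by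
    apply Set.Finite.image
    have : {j | 1 ≤ j ∧ j < i} = Set.Ico 1 i := rfl
    rw [this]; exact Set.finite_Ico 1 i
  have hne : ((fun j => η j ω) '' {j | 1 ≤ j ∧ j < i}).Nonempty :=
    ⟨η 1 ω, ⟨1, ⟨le_refl 1, by omega⟩, rfl⟩⟩
  simp only [Set.mem_preimage, Set.mem_singleton_iff, recordInd]
  constructor
  · intro h
    by_cases hc : η i ω < sInf ((fun j => η j ω) '' {j | 1 ≤ j ∧ j < i})
    · intro j hj1 hji
      exact (hfin.lt_csInf_iff hne).1 hc _ ⟨j, ⟨hj1, hji⟩, rfl⟩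
    · rw [if_neg hc] at h; exact absurd h (by decide)
  · intro h
    rw [if_pos]
    exact (hfin.lt_csInf_iff hne).2 (by rintro x ⟨j, ⟨hj1, hji⟩, rfl⟩; exact h j hj1 hji)

lemma recordInd_measurable (hmeas : ∀ i, Measurable (η i)) {i : ℕ} (hi : 2 ≤ i) :
    Measurable (recordInd η i) := by
  intro S _
  have h01 : ∀ y : Fin 2, y = 0 ∨ y = 1 := by decide
  have hdecomp : recordInd η i ⁻¹' S =
      (if (1 : Fin 2) ∈ S then recordInd η i ⁻¹' {1} else ∅) ∪
      (if (0 : Fin 2) ∈ S then (recordInd η i ⁻¹' {1})ᶜ else ∅) := by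
    ext ω
    simp only [Set.mem_preimage, Set.mem_union, Set.mem_compl_iff, Set.mem_singleton_iff]
    rcases h01 (recordInd η i ω) with h | h <;>
      by_cases h1 : (1 : Fin 2) ∈ S <;> by_cases h0 : (0 : Fin 2) ∈ S <;>
      simp [h, h1, h0]
  rw [hdecomp, recordInd_preimage hi]
  have hA := recSet_measurable hmeas i
  apply MeasurableSet.union <;> split <;> simp [hA, hA.compl]


lemma marginal_eq (hmeas : ∀ i, Measurable (η i))
    (hident : ∀ i j, 1 ≤ i → i ≤ n → 1 ≤ j → j ≤ n → IdentDistrib (η i) (η j) μ μ)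
    (hn1 : 1 ≤ n) {i : ℕ} (hi : i ∈ Finset.Icc 1 n) {s : Set ℝ} (hs : MeasurableSet s) :
    μ (η i ⁻¹' s) = (μ.map (η 1)) s := by
  rw [Finset.mem_Icc] at hi
  rw [← Measure.map_apply (hmeas i) hs,
    (hident i 1 hi.1 hi.2 le_rfl hn1).map_eq]

/-- The joint law of finitely many of the `η`'s is the product of the common marginal. -/
lemma joint_map (hmeas : ∀ i, Measurable (η i))
    (hindep : iIndepFun
      (fun i : (Finset.Icc 1 n : Finset ℕ) => η i) μ)
    (hident : ∀ i j, 1 ≤ i → i ≤ n → 1 ≤ j → j ≤ n → IdentDistrib (η i) (η j) μ μ)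
    (hn1 : 1 ≤ n) {m : ℕ} {a : Fin m → ℕ} (hainj : Function.Injective a)
    (ha : ∀ k, a k ∈ Finset.Icc 1 n) :
    μ.map (fun ω (k : Fin m) => η (a k) ω)
      = Measure.pi (fun _ : Fin m => μ.map (η 1)) := by
  have hF : Measurable (fun ω (k : Fin m) => η (a k) ω) :=
    measurable_pi_lambda _ fun k => hmeas _
  refine (Measure.pi_eq fun s hs => ?_).symm
  rw [Measure.map_apply hF (MeasurableSet.univ_pi hs)]
  have hpre : (fun ω (k : Fin m) => η (a k) ω) ⁻¹' Set.pi Set.univ s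
      = ⋂ k, η (a k) ⁻¹' s k := by
    ext ω; simp [Set.mem_pi]
  rw [hpre]
  set a' : Fin m → (Finset.Icc 1 n : Finset ℕ) := fun k => ⟨a k, ha k⟩ with ha'def
  have ha'inj : Function.Injective a' := fun k l h =>
    hainj (congrArg Subtype.val h)
  set sets : (Finset.Icc 1 n : Finset ℕ) → Set ℝ :=
    Function.extend a' s (fun _ => Set.univ) with hsetsdef
  have hsets_a : ∀ k, sets (a' k) = s k := fun k => ha'inj.extend_apply _ _ _
  have h1 := hindep.measure_inter_preimage_eq_mul (Finset.univ.image a') (sets := sets) ?_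
  · have hL : (⋂ i ∈ Finset.univ.image a', η (i : ℕ) ⁻¹' sets i)
        = ⋂ k, η (a k) ⁻¹' s k := by
      ext ω
      simp only [Set.mem_iInter, Finset.mem_image, Finset.mem_univ, true_and,
        Set.mem_preimage]
      constructor
      · intro h k
        have := h (a' k) ⟨k, rfl⟩
        rwa [hsets_a] at this
      · rintro h j ⟨k, rfl⟩
        rw [hsets_a]; exact h k
    have hR : (∏ i ∈ Finset.univ.image a', μ (η (i : ℕ) ⁻¹' sets i))
        = ∏ k : Fin m, (μ.map (η 1)) (s k) := by
      rw [Finset.prod_image (fun k _ l _ h => ha'inj h)]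
      exact Finset.prod_congr rfl fun k _ => by
        rw [hsets_a]; exact marginal_eq hmeas hident hn1 (ha k) (hs k)
    rw [hL, hR] at h1
    exact h1
  · rintro i hi
    rcases Finset.mem_image.1 hi with ⟨k, -, rfl⟩
    rw [hsets_a]; exact hs k

lemma chainSet_measurable (m : ℕ) :
    MeasurableSet {x : Fin m → ℝ | StrictMono x} := by
  have : {x : Fin m → ℝ | StrictMono x}
      = ⋂ (k : Fin m), ⋂ (l : Fin m), ⋂ (_ : k < l), {x | x k < x l} := by
    ext x
    simp only [Set.mem_setOf_eq, Set.mem_iInter]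
    exact ⟨fun h k l hkl => h hkl, fun h k l hkl => h k l hkl⟩
  rw [this]
  exact MeasurableSet.iInter fun k => MeasurableSet.iInter fun l =>
    MeasurableSet.iInter fun _ =>
      measurableSet_lt (measurable_pi_apply k) (measurable_pi_apply l)

lemma chainE_measurable (hmeas : ∀ i, Measurable (η i)) {m : ℕ} (a : Fin m → ℕ) :
    MeasurableSet {ω | StrictMono fun k => η (a k) ω} := by
  have hF : Measurable (fun ω (k : Fin m) => η (a k) ω) :=
    measurable_pi_lambda _ fun k => hmeas _
  exact hF (chainSet_measurable m)

lemma chain_meas (hmeas : ∀ i, Measurable (η i))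
    (hindep : iIndepFun
      (fun i : (Finset.Icc 1 n : Finset ℕ) => η i) μ)
    (hident : ∀ i j, 1 ≤ i → i ≤ n → 1 ≤ j → j ≤ n → IdentDistrib (η i) (η j) μ μ)
    (hn1 : 1 ≤ n) {m : ℕ} {a : Fin m → ℕ} (hainj : Function.Injective a)
    (ha : ∀ k, a k ∈ Finset.Icc 1 n) :
    μ {ω | StrictMono fun k => η (a k) ω}
      = Measure.pi (fun _ : Fin m => μ.map (η 1)) {x | StrictMono x} := by
  have hF : Measurable (fun ω (k : Fin m) => η (a k) ω) :=
    measurable_pi_lambda _ fun k => hmeas _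
  rw [← joint_map hmeas hindep hident hn1 hainj ha,
    Measure.map_apply hF (chainSet_measurable m)]
  rfl

lemma ties_null (hmeas : ∀ i, Measurable (η i))
    (hindep : iIndepFun
      (fun i : (Finset.Icc 1 n : Finset ℕ) => η i) μ)
    (hatomless : ∀ i, 1 ≤ i → i ≤ n → NoAtoms (μ.map (η i)))
    {i j : ℕ} (hi : i ∈ Finset.Icc 1 n) (hj : j ∈ Finset.Icc 1 n) (hij : i ≠ j) :
    μ {ω | η i ω = η j ω} = 0 := by
  have hIJ : IndepFun (η i) (η j) μ := by
    have := hindep.indepFun (i := (⟨i, hi⟩ : (Finset.Icc 1 n : Finset ℕ)))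
      (j := ⟨j, hj⟩) (by simp [hij])
    exact this
  have hmap := (indepFun_iff_map_prod_eq_prod_map_map (hmeas i).aemeasurable
    (hmeas j).aemeasurable).1 hIJ
  have hD : MeasurableSet {p : ℝ × ℝ | p.1 = p.2} :=
    measurableSet_eq_fun measurable_fst measurable_snd
  have hprod : Measurable (fun ω => (η i ω, η j ω)) := (hmeas i).prodMk (hmeas j)
  have h1 : {ω | η i ω = η j ω} = (fun ω => (η i ω, η j ω)) ⁻¹' {p | p.1 = p.2} := rfl
  rw [h1, ← Measure.map_apply hprod hD, hmap]
  rw [Finset.mem_Icc] at hj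
  haveI : NullSingletonClass (μ.map (η j)) := hatomless j hj.1 hj.2
  rw [Measure.prod_apply hD]
  have : ∀ x : ℝ, (μ.map (η j)) (Prod.mk x ⁻¹' {p : ℝ × ℝ | p.1 = p.2}) = 0 := by
    intro x
    have : (Prod.mk x ⁻¹' {p : ℝ × ℝ | p.1 = p.2}) = {x} := by
      ext y; simp [eq_comm]
    rw [this]; exact measure_singleton x
  simp [this]


lemma sort_unique {m : ℕ} {x : Fin m → ℝ} (σ σ' : Equiv.Perm (Fin m))
    (h1 : StrictMono fun k => x (σ k)) (h2 : StrictMono fun k => x (σ' k)) :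
    σ = σ' := by
  have hinj : Function.Injective x := by
    intro k l h
    have := h1.injective (a₁ := σ.symm k) (a₂ := σ.symm l)
      (by simp only [Equiv.apply_symm_apply]; exact h)
    have h2' := congrArg σ this
    simpa using h2'
  have hrange : Set.range (fun k => x (σ k)) = Set.range (fun k => x (σ' k)) := by
    have e1 : (fun k => x (σ k)) = x ∘ σ := rfl
    have e2 : (fun k => x (σ' k)) = x ∘ σ' := rfl
    rw [e1, e2, Set.range_comp, Set.range_comp, σ.surjective.range_eq,
      σ'.surjective.range_eq]
  haveI hWF : WellFoundedLT (Fin m) := inferInstance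
  have heq : (fun k => x (σ k)) = fun k => x (σ' k) :=
    (StrictMono.range_inj (f := fun k => x (σ k)) (g := fun k => x (σ' k)) h1 h2).1 hrange
  ext k
  exact congrArg Fin.val (hinj (congrFun heq k))

lemma exists_sort {m : ℕ} {x : Fin m → ℝ} (hinj : Function.Injective x) :
    ∃ σ : Equiv.Perm (Fin m), StrictMono fun k => x (σ k) :=
  ⟨Tuple.sort x, (Tuple.monotone_sort x).strictMono_of_injective
    (hinj.comp (Tuple.sort x).injective)⟩

/-- Each chain event of an injective tuple of length `m` has probability `1/m!`. -/
lemma chain_val (hmeas : ∀ i, Measurable (η i))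
    (hindep : iIndepFun
      (fun i : (Finset.Icc 1 n : Finset ℕ) => η i) μ)
    (hident : ∀ i j, 1 ≤ i → i ≤ n → 1 ≤ j → j ≤ n → IdentDistrib (η i) (η j) μ μ)
    (hatomless : ∀ i, 1 ≤ i → i ≤ n → NoAtoms (μ.map (η i)))
    (hn1 : 1 ≤ n) {m : ℕ} {a : Fin m → ℕ} (hainj : Function.Injective a)
    (ha : ∀ k, a k ∈ Finset.Icc 1 n) :
    μ {ω | StrictMono fun k => η (a k) ω} = ((m.factorial : ℝ≥0∞))⁻¹ := by
  set c : ℝ≥0∞ := Measure.pi (fun _ : Fin m => μ.map (η 1)) {x | StrictMono x} with hc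
  set E : Equiv.Perm (Fin m) → Set Ω :=
    fun σ => {ω | StrictMono fun k => η (a (σ k)) ω} with hE
  have hEc : ∀ σ, μ (E σ) = c := by
    intro σ
    exact chain_meas hmeas hindep hident hn1
      (hainj.comp σ.injective) (fun k => ha (σ k))
  have hEm : ∀ σ, MeasurableSet (E σ) := fun σ => chainE_measurable hmeas _
  have hdisj : Pairwise (Function.onFun Disjoint E) := by
    intro σ σ' hne
    rw [Function.onFun, Set.disjoint_left]
    intro ω hω hω'
    exact hne (sort_unique (x := fun k => η (a k) ω) σ σ' hω hω')
  -- the union has full measure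
  have hT : μ (⋃ (k : Fin m), ⋃ (l : Fin m), ⋃ (_ : k ≠ l),
      {ω | η (a k) ω = η (a l) ω}) = 0 := by
    refine measure_iUnion_null fun k => measure_iUnion_null fun l =>
      measure_iUnion_null fun hkl => ?_
    exact ties_null hmeas hindep hatomless (ha k) (ha l) (fun h => hkl (hainj h))
  have hcover : Set.univ \ (⋃ (k : Fin m), ⋃ (l : Fin m), ⋃ (_ : k ≠ l),
      {ω | η (a k) ω = η (a l) ω}) ⊆ ⋃ σ, E σ := by
    intro ω hω
    have hinj : Function.Injective fun k => η (a k) ω := by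
      intro k l h
      by_contra hkl
      exact hω.2 (Set.mem_iUnion.2 ⟨k, Set.mem_iUnion.2 ⟨l, Set.mem_iUnion.2 ⟨hkl, h⟩⟩⟩)
    obtain ⟨σ, hσ⟩ := exists_sort hinj
    exact Set.mem_iUnion.2 ⟨σ, hσ⟩
  have hunion : μ (⋃ σ, E σ) = 1 := by
    refine le_antisymm (le_trans (measure_mono (Set.subset_univ _)) (by simp)) ?_
    calc (1 : ℝ≥0∞) = μ (Set.univ \ _) := by rw [measure_diff_null hT]; simp
    _ ≤ μ (⋃ σ, E σ) := measure_mono hcover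
  have hsum : μ (⋃ σ, E σ) = ∑ σ : Equiv.Perm (Fin m), μ (E σ) := by
    rw [measure_iUnion hdisj hEm, tsum_fintype]
  have hcard : (m.factorial : ℝ≥0∞) * c = 1 := by
    have : ∑ σ : Equiv.Perm (Fin m), μ (E σ) = (Fintype.card (Equiv.Perm (Fin m))) * c := by
      rw [Finset.sum_congr rfl fun σ _ => hEc σ, Finset.sum_const, Finset.card_univ,
        nsmul_eq_mul]
    rw [hsum, this, Fintype.card_perm, Fintype.card_fin] at hunion
    exact hunion
  have hfac0 : (m.factorial : ℝ≥0∞) ≠ 0 := by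
    simp [Nat.factorial_ne_zero]
  have hfactop : (m.factorial : ℝ≥0∞) ≠ ⊤ := by simp
  have : c = ((m.factorial : ℝ≥0∞))⁻¹ := by
    calc c = ((m.factorial : ℝ≥0∞)⁻¹ * (m.factorial : ℝ≥0∞)) * c := by
          rw [ENNReal.inv_mul_cancel hfac0 hfactop, one_mul]
    _ = (m.factorial : ℝ≥0∞)⁻¹ * ((m.factorial : ℝ≥0∞) * c) := by ring
    _ = (m.factorial : ℝ≥0∞)⁻¹ := by rw [hcard, mul_one]
  rw [← this, hc]
  exact chain_meas hmeas hindep hident hn1 hainj ha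

/-- Decomposition of the measure of a set along the chain events of `η 1, …, η m`. -/
lemma sum_decomp (hmeas : ∀ i, Measurable (η i))
    (hindep : iIndepFun
      (fun i : (Finset.Icc 1 n : Finset ℕ) => η i) μ)
    (hatomless : ∀ i, 1 ≤ i → i ≤ n → NoAtoms (μ.map (η i)))
    {m : ℕ} (hmn : m ≤ n) {X : Set Ω} (hX : MeasurableSet X) :
    μ X = ∑ σ : Equiv.Perm (Fin m),
      μ (X ∩ {ω | StrictMono fun k => η ((σ k : ℕ) + 1) ω}) := by
  set b : Fin m → ℕ := fun k => (k : ℕ) + 1 with hb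
  have hbinj : Function.Injective b := by
    intro k l h
    have h' : (k : ℕ) + 1 = (l : ℕ) + 1 := h
    exact Fin.val_injective (by omega)
  have hbmem : ∀ k, b k ∈ Finset.Icc 1 n := by
    intro k
    have hbk : b k = (k : ℕ) + 1 := rfl
    rw [hbk, Finset.mem_Icc]
    have := k.isLt
    omega
  set E : Equiv.Perm (Fin m) → Set Ω :=
    fun σ => {ω | StrictMono fun k => η (b (σ k)) ω} with hE
  have hEm : ∀ σ, MeasurableSet (E σ) := fun σ => chainE_measurable hmeas _
  have hdisj : Pairwise (Function.onFun Disjoint E) := by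
    intro σ σ' hne
    rw [Function.onFun, Set.disjoint_left]
    intro ω hω hω'
    exact hne (sort_unique (x := fun k => η (b k) ω) σ σ' hω hω')
  have hT : μ (⋃ (k : Fin m), ⋃ (l : Fin m), ⋃ (_ : k ≠ l),
      {ω | η (b k) ω = η (b l) ω}) = 0 := by
    refine measure_iUnion_null fun k => measure_iUnion_null fun l =>
      measure_iUnion_null fun hkl => ?_
    exact ties_null hmeas hindep hatomless (hbmem k) (hbmem l) (fun h => hkl (hbinj h))
  have hcover : (⋃ σ, E σ)ᶜ ⊆ ⋃ (k : Fin m), ⋃ (l : Fin m), ⋃ (_ : k ≠ l),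
      {ω | η (b k) ω = η (b l) ω} := by
    intro ω hω
    by_contra hmem
    have hinj : Function.Injective fun k => η (b k) ω := by
      intro k l h
      by_contra hkl
      exact hmem (Set.mem_iUnion.2 ⟨k, Set.mem_iUnion.2 ⟨l, Set.mem_iUnion.2 ⟨hkl, h⟩⟩⟩)
    obtain ⟨σ, hσ⟩ := exists_sort hinj
    exact hω (Set.mem_iUnion.2 ⟨σ, hσ⟩)
  have hcompl : μ ((⋃ σ, E σ)ᶜ) = 0 := measure_mono_null hcover hT
  calc μ X = μ (X ∩ ⋃ σ, E σ) := (measure_inter_conull hcompl).symm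
  _ = μ (⋃ σ, X ∩ E σ) := by rw [Set.inter_iUnion]
  _ = ∑' σ, μ (X ∩ E σ) := measure_iUnion
      (fun σ σ' hne => (hdisj hne).mono Set.inter_subset_right Set.inter_subset_right)
      (fun σ => hX.inter (hEm σ))
  _ = ∑ σ : Equiv.Perm (Fin m), μ (X ∩ E σ) := tsum_fintype _


lemma cmp_congr {m : ℕ} {σ : Equiv.Perm (Fin m)} {ω ω' : Ω}
    (hω : StrictMono fun k => η ((σ k : ℕ) + 1) ω)
    (hω' : StrictMono fun k => η ((σ k : ℕ) + 1) ω')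
    {p q : ℕ} (hp1 : 1 ≤ p) (hpm : p ≤ m) (hq1 : 1 ≤ q) (hqm : q ≤ m) :
    (η p ω < η q ω ↔ η p ω' < η q ω') := by
  set kp : Fin m := ⟨p - 1, by omega⟩ with hkp
  set kq : Fin m := ⟨q - 1, by omega⟩ with hkq
  have key : ∀ ω0 : Ω, StrictMono (fun k => η ((σ k : ℕ) + 1) ω0) →
      (η p ω0 < η q ω0 ↔ σ.symm kp < σ.symm kq) := by
    intro ω0 h0
    have ep : η ((σ (σ.symm kp) : ℕ) + 1) ω0 = η p ω0 := by
      rw [Equiv.apply_symm_apply]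
      congr 1
      show p - 1 + 1 = p
      omega
    have eq' : η ((σ (σ.symm kq) : ℕ) + 1) ω0 = η q ω0 := by
      rw [Equiv.apply_symm_apply]
      congr 1
      show q - 1 + 1 = q
      omega
    rw [← ep, ← eq']
    exact h0.lt_iff_lt
  rw [key ω hω, key ω' hω']

lemma recSet_congr {m : ℕ} {σ : Equiv.Perm (Fin m)} {ω ω' : Ω}
    (hω : StrictMono fun k => η ((σ k : ℕ) + 1) ω)
    (hω' : StrictMono fun k => η ((σ k : ℕ) + 1) ω')
    {i : ℕ} (hi2 : 2 ≤ i) (him : i ≤ m) :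
    (ω ∈ recSet η i ↔ ω' ∈ recSet η i) := by
  simp only [recSet, Set.mem_setOf_eq]
  refine forall_congr' fun j => ?_
  refine imp_congr_right fun hj1 => imp_congr_right fun hji => ?_
  exact cmp_congr hω hω' (by omega) (by omega) hj1 (by omega)

lemma recSet_inter_chain {m : ℕ} {σ : Equiv.Perm (Fin m)} :
    recSet η (m + 1) ∩ {ω | StrictMono fun k => η ((σ k : ℕ) + 1) ω}
      = {ω | StrictMono fun k : Fin (m + 1) =>
          η (Fin.cons (α := fun _ : Fin (m + 1) => ℕ) (m + 1) (fun k => (σ k : ℕ) + 1) k) ω} := by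
  ext ω
  simp only [Set.mem_inter_iff, Set.mem_setOf_eq, recSet]
  constructor
  · rintro ⟨hA, hE⟩ k l hkl
    rcases Fin.eq_zero_or_eq_succ l with rfl | ⟨l', rfl⟩
    · exact absurd hkl (Fin.not_lt_zero k)
    rcases Fin.eq_zero_or_eq_succ k with rfl | ⟨k', rfl⟩
    · simp only [Fin.cons_zero, Fin.cons_succ]
      exact hA _ (by omega) (by have := (σ l').isLt; omega)
    · simp only [Fin.cons_succ]
      exact hE (by rwa [Fin.succ_lt_succ_iff] at hkl)
  · intro h
    constructor
    · intro j hj1 hjm1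
      have hj : j - 1 < m := by omega
      set k : Fin m := ⟨j - 1, hj⟩ with hk
      have h0 := h (a := 0) (b := (σ.symm k).succ) (Fin.succ_pos _)
      simp only [Fin.cons_zero, Fin.cons_succ] at h0
      have hjj : ((σ (σ.symm k) : ℕ) + 1) = j := by
        rw [Equiv.apply_symm_apply]
        show j - 1 + 1 = j
        omega
      rwa [hjj] at h0
    · intro k l hkl
      have := h (a := k.succ) (b := l.succ) (by rwa [Fin.succ_lt_succ_iff])
      simpa only [Fin.cons_succ] using this

lemma factorial_succ_inv (m : ℕ) :
    (((m + 1).factorial : ℝ≥0∞))⁻¹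
      = (((m + 1 : ℕ)) : ℝ≥0∞)⁻¹ * ((m.factorial : ℝ≥0∞))⁻¹ := by
  rw [Nat.factorial_succ, Nat.cast_mul,
    ENNReal.mul_inv (Or.inl (by exact_mod_cast Nat.succ_ne_zero m))
      (Or.inl (ENNReal.natCast_ne_top _))]

lemma key_step (hmeas : ∀ i, Measurable (η i))
    (hindep : iIndepFun
      (fun i : (Finset.Icc 1 n : Finset ℕ) => η i) μ)
    (hident : ∀ i j, 1 ≤ i → i ≤ n → 1 ≤ j → j ≤ n → IdentDistrib (η i) (η j) μ μ)
    (hatomless : ∀ i, 1 ≤ i → i ≤ n → NoAtoms (μ.map (η i)))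
    (hn1 : 1 ≤ n) {m : ℕ} (hmn : m + 1 ≤ n) {C : Set Ω} (hC : MeasurableSet C)
    (hCconst : ∀ σ : Equiv.Perm (Fin m), ∀ ω ω',
      StrictMono (fun k => η ((σ k : ℕ) + 1) ω) →
      StrictMono (fun k => η ((σ k : ℕ) + 1) ω') → (ω ∈ C ↔ ω' ∈ C)) :
    μ (recSet η (m + 1) ∩ C) = (((m + 1 : ℕ)) : ℝ≥0∞)⁻¹ * μ C := by
  have hmn' : m ≤ n := by omega
  have hA : MeasurableSet (recSet η (m + 1)) := recSet_measurable hmeas _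
  rw [sum_decomp hmeas hindep hatomless hmn' (hA.inter hC),
    sum_decomp hmeas hindep hatomless hmn' hC, Finset.mul_sum]
  refine Finset.sum_congr rfl fun σ _ => ?_
  set E : Set Ω := {ω | StrictMono fun k => η ((σ k : ℕ) + 1) ω} with hEdef
  by_cases hgood : ∃ ω ∈ E, ω ∈ C
  · obtain ⟨ω0, hω0E, hω0C⟩ := hgood
    have hCE : C ∩ E = E :=
      Set.inter_eq_right.mpr fun ω hω => (hCconst σ ω ω0 hω hω0E).2 hω0C
    have h1 : recSet η (m + 1) ∩ C ∩ E = recSet η (m + 1) ∩ E := by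
      rw [Set.inter_assoc, hCE]
    rw [h1, hCE]
    -- compute both measures via chain_val
    set a : Fin (m + 1) → ℕ := Fin.cons (α := fun _ : Fin (m + 1) => ℕ) (m + 1) (fun k => (σ k : ℕ) + 1) with hadef
    have hainj : Function.Injective a := by
      intro k l h
      rcases Fin.eq_zero_or_eq_succ k with rfl | ⟨k', rfl⟩ <;>
        rcases Fin.eq_zero_or_eq_succ l with rfl | ⟨l', rfl⟩
      · rfl
      · exfalso
        have h' : m + 1 = (σ l' : ℕ) + 1 := by
          simpa only [hadef, Fin.cons_zero, Fin.cons_succ] using h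
        have := (σ l').isLt
        omega
      · exfalso
        have h' : (σ k' : ℕ) + 1 = m + 1 := by
          simpa only [hadef, Fin.cons_zero, Fin.cons_succ] using h
        have := (σ k').isLt
        omega
      · have h' : (σ k' : ℕ) + 1 = (σ l' : ℕ) + 1 := by
          simpa only [hadef, Fin.cons_succ] using h
        have : σ k' = σ l' := Fin.val_injective (by omega)
        rw [σ.injective this]
    have hamem : ∀ k, a k ∈ Finset.Icc 1 n := by
      intro k
      rcases Fin.eq_zero_or_eq_succ k with rfl | ⟨k', rfl⟩
      · have : a 0 = m + 1 := rfl
        rw [this, Finset.mem_Icc]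
        omega
      · have : a k'.succ = (σ k' : ℕ) + 1 := rfl
        rw [this, Finset.mem_Icc]
        have := (σ k').isLt
        omega
    have hbinj : Function.Injective (fun k : Fin m => (σ k : ℕ) + 1) := by
      intro k l h
      have h' : (σ k : ℕ) + 1 = (σ l : ℕ) + 1 := h
      exact σ.injective (Fin.val_injective (by omega))
    have hbmem : ∀ k : Fin m, (σ k : ℕ) + 1 ∈ Finset.Icc 1 n := by
      intro k
      rw [Finset.mem_Icc]
      have := (σ k).isLt
      omega
    have e1 : recSet η (m + 1) ∩ E = {ω | StrictMono fun k : Fin (m + 1) => η (a k) ω} :=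
      recSet_inter_chain
    rw [e1, chain_val hmeas hindep hident hatomless hn1 hainj hamem,
      chain_val hmeas hindep hident hatomless hn1 hbinj hbmem]
    exact factorial_succ_inv m
  · have hCE : C ∩ E = ∅ := by
      rw [Set.eq_empty_iff_forall_notMem]
      rintro ω ⟨hωC, hωE⟩
      exact hgood ⟨ω, hωE, hωC⟩
    have h1 : recSet η (m + 1) ∩ C ∩ E = ∅ := by
      rw [Set.inter_assoc, hCE, Set.inter_empty]
    rw [h1, hCE]
    simp

lemma main_prob (hmeas : ∀ i, Measurable (η i))
    (hindep : iIndepFun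
      (fun i : (Finset.Icc 1 n : Finset ℕ) => η i) μ)
    (hident : ∀ i j, 1 ≤ i → i ≤ n → 1 ≤ j → j ≤ n → IdentDistrib (η i) (η j) μ μ)
    (hatomless : ∀ i, 1 ≤ i → i ≤ n → NoAtoms (μ.map (η i)))
    (hn1 : 1 ≤ n) :
    ∀ m, m ≤ n → ∀ S : Finset ℕ, S ⊆ Finset.Icc 2 m →
      μ (⋂ i ∈ S, recSet η i) = ∏ i ∈ S, ((i : ℝ≥0∞))⁻¹ := by
  intro m
  induction m with
  | zero =>
    intro _ S hS
    have hSe : S = ∅ := Finset.subset_empty.1 (by simpa using hS)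
    subst hSe
    simp
  | succ m ih =>
    intro hmn S hS
    by_cases hmem : m + 1 ∈ S
    · have hm1 : 1 ≤ m := by
        have := hS hmem
        rw [Finset.mem_Icc] at this
        omega
      set S' := S.erase (m + 1) with hS'def
      have hS' : S' ⊆ Finset.Icc 2 m := by
        intro i hi
        have h1 := Finset.mem_of_mem_erase hi
        have h2 := Finset.ne_of_mem_erase hi
        have h3 := hS h1
        rw [Finset.mem_Icc] at h3 ⊢
        omega
      have hSsplit : S = insert (m + 1) S' := (Finset.insert_erase hmem).symm
      set C := ⋂ i ∈ S', recSet η i with hCdef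
      have hCmeas : MeasurableSet C :=
        MeasurableSet.biInter (Set.to_countable _)
          (fun i _ => recSet_measurable hmeas i)
      have hCconst : ∀ σ : Equiv.Perm (Fin m), ∀ ω ω',
          StrictMono (fun k => η ((σ k : ℕ) + 1) ω) →
          StrictMono (fun k => η ((σ k : ℕ) + 1) ω') → (ω ∈ C ↔ ω' ∈ C) := by
        intro σ ω ω' hω hω'
        have hiff : ∀ i ∈ S', (ω ∈ recSet η i ↔ ω' ∈ recSet η i) := by
          intro i hi
          have := hS' hi
          rw [Finset.mem_Icc] at this
          exact recSet_congr hω hω' this.1 this.2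
        simp only [hCdef, Set.mem_iInter]
        constructor
        · intro h i hi
          exact (hiff i hi).1 (h i hi)
        · intro h i hi
          exact (hiff i hi).2 (h i hi)
      calc μ (⋂ i ∈ S, recSet η i) = μ (recSet η (m + 1) ∩ C) := by
            rw [hSsplit, Finset.set_biInter_insert]
      _ = (((m + 1 : ℕ)) : ℝ≥0∞)⁻¹ * μ C :=
            key_step hmeas hindep hident hatomless hn1 hmn hCmeas hCconst
      _ = (((m + 1 : ℕ)) : ℝ≥0∞)⁻¹ * ∏ i ∈ S', ((i : ℝ≥0∞))⁻¹ := by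
            rw [ih (by omega) S' hS']
      _ = ∏ i ∈ S, ((i : ℝ≥0∞))⁻¹ := by
            rw [hSsplit, Finset.prod_insert (Finset.notMem_erase _ _)]
    · have hsub : S ⊆ Finset.Icc 2 m := by
        intro i hi
        have h2 := hS hi
        have : i ≠ m + 1 := fun e => hmem (e ▸ hi)
        rw [Finset.mem_Icc] at h2 ⊢
        omega
      exact ih (by omega) S hsub


lemma preimage_measurable_generate {i : ℕ} (hi : 2 ≤ i) (S : Set (Fin 2)) :
    MeasurableSet[MeasurableSpace.generateFrom {recSet η i}] (recordInd η i ⁻¹' S) := by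
  have h01 : ∀ y : Fin 2, y = 0 ∨ y = 1 := by decide
  have hdecomp : recordInd η i ⁻¹' S =
      (if (1 : Fin 2) ∈ S then recordInd η i ⁻¹' {1} else ∅) ∪
      (if (0 : Fin 2) ∈ S then (recordInd η i ⁻¹' {1})ᶜ else ∅) := by
    ext ω
    simp only [Set.mem_preimage, Set.mem_union, Set.mem_compl_iff, Set.mem_singleton_iff]
    rcases h01 (recordInd η i ω) with h | h <;>
      by_cases h1 : (1 : Fin 2) ∈ S <;> by_cases h0 : (0 : Fin 2) ∈ S <;>
      simp [h, h1, h0]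
  rw [hdecomp, recordInd_preimage hi]
  have hbasic : MeasurableSet[MeasurableSpace.generateFrom {recSet η i}] (recSet η i) :=
    MeasurableSpace.measurableSet_generateFrom rfl
  apply MeasurableSet.union <;> split <;>
    first
      | exact hbasic
      | exact hbasic.compl
      | exact @MeasurableSet.empty _ (MeasurableSpace.generateFrom {recSet η i})

end Aux


/-- For i.i.d. real random variables `η₁, …, η_n` (`n ≥ 2`) with atomless
common distribution, the record indicators `B₂, …, B_n` are mutually independent and
`P(B_i = 1) = 1 / i` for every `2 ≤ i ≤ n`. -/
theorem record_indicators_indep {Ω : Type*} [MeasurableSpace Ω] (μ : Measure Ω)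
    [IsProbabilityMeasure μ] (n : ℕ) (hn : 2 ≤ n) (η : ℕ → Ω → ℝ)
    (hmeas : ∀ i, Measurable (η i))
    (hindep : iIndepFun
      (fun i : (Finset.Icc 1 n : Finset ℕ) => η i) μ)
    (hident : ∀ i j, 1 ≤ i → i ≤ n → 1 ≤ j → j ≤ n → IdentDistrib (η i) (η j) μ μ)
    (hatomless : ∀ i, 1 ≤ i → i ≤ n → NoAtoms (μ.map (η i))) :
    iIndepFun
        (fun (i : (Finset.Icc 2 n : Finset ℕ)) => recordInd η i) μ ∧
      ∀ i, 2 ≤ i → i ≤ n → μ {ω | recordInd η i ω = 1} = 1 / (i : ℝ≥0∞) := by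
  have hn1 : 1 ≤ n := by omega
  have hsingle : ∀ i : ℕ, 2 ≤ i → i ≤ n → μ (recSet η i) = ((i : ℝ≥0∞))⁻¹ := by
    intro i h2i hin
    have h := main_prob hmeas hindep hident hatomless hn1 n le_rfl {i}
      (Finset.singleton_subset_iff.2 (Finset.mem_Icc.2 ⟨h2i, hin⟩))
    simpa using h
  constructor
  · have h2mem : ∀ i : (Finset.Icc 2 n : Finset ℕ), 2 ≤ (i : ℕ) ∧ (i : ℕ) ≤ n := by
      intro i
      have := i.2
      rwa [Finset.mem_Icc] at this
    show iIndep (fun i : (Finset.Icc 2 n : Finset ℕ) =>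
      MeasurableSpace.comap (recordInd η (i : ℕ)) inferInstance) μ
    refine iIndepSets.iIndep
      (fun i => (recordInd_measurable hmeas (h2mem i).1).comap_le)
      (fun i => {recSet η (i : ℕ)}) (fun i => ?_) (fun i => ?_) ?_
    · -- pi-system
      rintro s hs t ht -
      rw [Set.mem_singleton_iff] at hs ht
      subst hs; subst ht
      simp
    · -- generation
      apply le_antisymm
      · rintro t ⟨S, -, rfl⟩
        exact preimage_measurable_generate (h2mem i).1 S
      · refine MeasurableSpace.generateFrom_le ?_
        rintro t ht
        rw [Set.mem_singleton_iff] at ht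
        subst ht
        exact ⟨{1}, measurableSet_singleton 1, recordInd_preimage (h2mem i).1⟩
    · -- independence of the pi-systems
      rw [iIndepSets_iff]
      intro s f' hf'
      have hf'' : ∀ i ∈ s, f' i = recSet η (i : ℕ) := fun i hi => hf' i hi
      have hL : (⋂ i ∈ s, f' i) = ⋂ i ∈ s, recSet η (i : ℕ) :=
        Set.iInter₂_congr hf''
      have him : (⋂ i ∈ s, recSet η (i : ℕ))
          = ⋂ j ∈ Finset.image Subtype.val s, recSet η j := by
        ext ω
        simp only [Set.mem_iInter, Finset.mem_image]
        constructor
        · rintro h j ⟨i, hi, rfl⟩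
          exact h i hi
        · intro h i hi
          exact h _ ⟨i, hi, rfl⟩
      have hsub : Finset.image Subtype.val s ⊆ Finset.Icc 2 n := by
        intro j hj
        rcases Finset.mem_image.1 hj with ⟨i, _, rfl⟩
        exact i.2
      have hmain := main_prob hmeas hindep hident hatomless hn1 n le_rfl
        (Finset.image Subtype.val s) hsub
      rw [hL, him, hmain,
        Finset.prod_image (fun i _ j _ h => Subtype.ext h)]
      refine Finset.prod_congr rfl fun i hi => ?_
      rw [hf'' i hi, hsingle (i : ℕ) (h2mem i).1 (h2mem i).2]
  · intro i h2i hin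
    have hset : {ω | recordInd η i ω = 1} = recSet η i := recordInd_preimage h2i
    rw [hset, hsingle i h2i hin, one_div]
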